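/- If S₁ has a dense intersection with S₂, and S₃ is an ample subset of S₂, then S₁ has a dense intersection with S₃. -/
import Mathlib

def Ample {n : ℕ} (S : Set (EuclideanSpace ℝ (Fin n))) : Prop :=
  S ⊆ closure (interior S)

/-- `S₁` has a dense intersection with `S₂` if `S₂ ⊆ cl (S₁ ∩ S₂)`. -/
def DenseInter {n : ℕ} (S₁ S₂ : Set (EuclideanSpace ℝ (Fin n))) : Prop :=
  S₂ ⊆ closure (S₁ ∩ S₂)

theorem denseInter_of_ample_subset {n : ℕ} (S₁ S₂ S₃ : Set (EuclideanSpace ℝ (Fin n)))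
    (h12 : DenseInter S₁ S₂) (h3sub : S₃ ⊆ S₂) (h3 : Ample S₃) :
    DenseInter S₁ S₃ := by
  have key : interior S₃ ⊆ closure (S₁ ∩ S₃) := by
    intro x hx
    have hx2 : x ∈ closure (S₁ ∩ S₂) := h12 (h3sub (interior_subset hx))
    have h1 : x ∈ interior S₃ ∩ closure (S₁ ∩ S₂) := ⟨hx, hx2⟩
    have h2 := isOpen_interior.inter_closure h1
    refine closure_mono ?_ h2
    rintro y ⟨hy1, hy2, _⟩
    exact ⟨hy2, interior_subset hy1⟩
  intro x hx
  have := h3 hx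
  have : x ∈ closure (closure (S₁ ∩ S₃)) := closure_mono key this
  rwa [closure_closure] at this
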